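/- Let y ∈ H¹(0,1) with y'(0) = y'(1) = 0, and Q_h the L² projection onto S̃_h¹(0,1) on the uniform mesh with size h. Then ‖(Q_h y)'‖_{L²(0,1)} ≤ (1 + 4√6) ‖y'‖_{L²(0,1)}. -/

import Mathlib

open MeasureTheory intervalIntegral


/-- Cauchy–Schwarz for interval integrals. -/
lemma my_integral_cs {a b : ℝ} (hab : a ≤ b) (f g : ℝ → ℝ)
    (hf2 : IntervalIntegrable (fun t => f t ^ 2) volume a b)
    (hg2 : IntervalIntegrable (fun t => g t ^ 2) volume a b)
    (hfg : IntervalIntegrable (fun t => f t * g t) volume a b) :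
    (∫ t in a..b, f t * g t) ^ 2 ≤
      (∫ t in a..b, f t ^ 2) * ∫ t in a..b, g t ^ 2 := by
  set A := ∫ t in a..b, f t ^ 2 with hA
  set B := ∫ t in a..b, g t ^ 2 with hB
  set C := ∫ t in a..b, f t * g t with hC
  have key : ∀ lam : ℝ, 0 ≤ A - 2 * lam * C + lam ^ 2 * B := by
    intro lam
    have h0 : 0 ≤ ∫ t in a..b, (f t - lam * g t) ^ 2 :=
      integral_nonneg hab fun u _ => sq_nonneg _
    have hexp : (∫ t in a..b, (f t - lam * g t) ^ 2)
        = A - 2 * lam * C + lam ^ 2 * B := by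
      have h1 : ∀ t ∈ Set.uIcc a b, (f t - lam * g t) ^ 2
          = (f t ^ 2 - 2 * lam * (f t * g t)) + lam ^ 2 * g t ^ 2 := by
        intro t _; ring
      rw [integral_congr h1, integral_add ((hf2.sub (hfg.const_mul (2 * lam))))
          (hg2.const_mul (lam ^ 2)), integral_sub hf2 (hfg.const_mul (2 * lam)),
        intervalIntegral.integral_const_mul, intervalIntegral.integral_const_mul]
    linarith [hexp ▸ h0]
  have hB0 : 0 ≤ B := integral_nonneg hab fun u _ => sq_nonneg _
  rcases hB0.eq_or_lt with hB1 | hB1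
  · have hC0 : C = 0 := by
      by_contra hC0
      have h := key ((A + 1) / (2 * C))
      rw [← hB1, mul_zero, add_zero] at h
      have h2 : 2 * ((A + 1) / (2 * C)) * C = A + 1 := by field_simp
      rw [h2] at h
      linarith
    have hA0 : 0 ≤ A := integral_nonneg hab fun u _ => sq_nonneg _
    rw [hC0, ← hB1]
    nlinarith
  · have h := key (C / B)
    have h3 : C / B * B = C := div_mul_cancel₀ _ hB1.ne'
    have h4 : C / B * C * B = C * C := by rw [mul_comm (C/B) C, mul_assoc, h3]
    have h5 : (C / B) ^ 2 * B * B = C * C := by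
      field_simp
    nlinarith [mul_nonneg h hB1.le, h4, h5]

/-- `(∫_c^t g)² ≤ (b-a) ∫_a^b g²` for `c, t ∈ [a,b]`. -/
lemma my_sq_integral_le {a b c t : ℝ} (hab : a ≤ b) (hc : c ∈ Set.Icc a b)
    (ht : t ∈ Set.Icc a b) (g : ℝ → ℝ)
    (hg : IntervalIntegrable g volume a b)
    (hg2 : IntervalIntegrable (fun u => g u ^ 2) volume a b) :
    (∫ u in c..t, g u) ^ 2 ≤ (b - a) * ∫ u in a..b, g u ^ 2 := by
  have main : ∀ c t : ℝ, c ∈ Set.Icc a b → t ∈ Set.Icc a b → c ≤ t →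
      (∫ u in c..t, g u) ^ 2 ≤ (b - a) * ∫ u in a..b, g u ^ 2 := by
    intro c t hc ht hct
    have hsub : Set.uIcc c t ⊆ Set.uIcc a b := by
      rw [Set.uIcc_of_le hct, Set.uIcc_of_le hab]
      exact Set.Icc_subset_Icc hc.1 ht.2
    have hg' : IntervalIntegrable g volume c t := hg.mono_set hsub
    have hg2' : IntervalIntegrable (fun u => g u ^ 2) volume c t := hg2.mono_set hsub
    have hone : IntervalIntegrable (fun _ : ℝ => (1:ℝ)) volume c t :=
      intervalIntegrable_const
    have cs := my_integral_cs hct g (fun _ => (1:ℝ)) hg2' (by simpa using hone)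
      (by simpa using hg')
    simp only [mul_one, one_pow] at cs
    have h1 : (∫ _ in c..t, (1:ℝ)) = t - c := by simp
    rw [h1] at cs
    have h2 : (∫ u in c..t, g u ^ 2) ≤ ∫ u in a..b, g u ^ 2 :=
      integral_mono_interval hc.1 hct ht.2
        (Filter.Eventually.of_forall fun u => sq_nonneg _) hg2
    have h3 : 0 ≤ ∫ u in c..t, g u ^ 2 := integral_nonneg hct fun u _ => sq_nonneg _
    calc (∫ u in c..t, g u) ^ 2 ≤ (∫ u in c..t, g u ^ 2) * (t - c) := cs
      _ ≤ (∫ u in a..b, g u ^ 2) * (b - a) := by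
          apply mul_le_mul h2 (by linarith [hc.1, ht.2]) (by linarith) ?_
          exact integral_nonneg hab fun u _ => sq_nonneg _
      _ = (b - a) * ∫ u in a..b, g u ^ 2 := mul_comm _ _
  rcases le_total c t with hct | htc
  · exact main c t hc ht hct
  · have := main t c ht hc htc
    rw [integral_symm]
    rw [neg_pow]
    simpa using this
    
/-- a.e. equality on `Ι a b` off a single point, integral version. -/
lemma my_integral_congr_off_singleton {a b p : ℝ} {f g : ℝ → ℝ}
    (hfg : ∀ u ∈ Set.uIoc a b, u ≠ p → f u = g u) :
    ∫ u in a..b, f u = ∫ u in a..b, g u := by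
  apply intervalIntegral.integral_congr_ae
  have h1 : ∀ᵐ u : ℝ ∂volume, u ≠ p := by
    rw [ae_iff]
    convert Real.volume_singleton (a := p) using 2
    ext u; simp
  filter_upwards [h1] with u h1 h2
  exact hfg u h2 h1

/-- a.e. equality on restricted measure off a single point. -/
lemma my_ae_restrict_off_singleton {a b p : ℝ} {f g : ℝ → ℝ}
    (hfg : ∀ u ∈ Set.uIoc a b, u ≠ p → f u = g u) :
    f =ᵐ[volume.restrict (Set.uIoc a b)] g := by
  have h1 : ∀ᵐ u : ℝ ∂volume, u ≠ p := by
    rw [ae_iff]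
    convert Real.volume_singleton (a := p) using 2
    ext u; simp
  have h2 : ∀ᵐ u ∂(volume.restrict (Set.uIoc a b)), u ∈ Set.uIoc a b :=
    ae_restrict_mem measurableSet_uIoc
  filter_upwards [ae_restrict_of_ae h1, h2] with u hu1 hu2
  exact hfg u hu2 hu1

/-- Discrete Minkowski inequality. -/
lemma my_minkowski (s : Finset ℕ) (f g : ℕ → ℝ) :
    Real.sqrt (∑ i ∈ s, (f i + g i) ^ 2) ≤
      Real.sqrt (∑ i ∈ s, f i ^ 2) + Real.sqrt (∑ i ∈ s, g i ^ 2) := by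
  have hA : 0 ≤ ∑ i ∈ s, f i ^ 2 := Finset.sum_nonneg fun i _ => sq_nonneg _
  have hB : 0 ≤ ∑ i ∈ s, g i ^ 2 := Finset.sum_nonneg fun i _ => sq_nonneg _
  have cs := Finset.sum_mul_sq_le_sq_mul_sq s f g
  have h1 : ∑ i ∈ s, f i * g i ≤
      Real.sqrt (∑ i ∈ s, f i ^ 2) * Real.sqrt (∑ i ∈ s, g i ^ 2) := by
    have h2 : ∑ i ∈ s, f i * g i ≤ |∑ i ∈ s, f i * g i| := le_abs_self _
    have h3 : |∑ i ∈ s, f i * g i| = Real.sqrt ((∑ i ∈ s, f i * g i) ^ 2) :=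
      (Real.sqrt_sq_eq_abs _).symm
    rw [← Real.sqrt_mul hA]
    exact h2.trans (h3 ▸ Real.sqrt_le_sqrt cs)
  have key : (∑ i ∈ s, (f i + g i) ^ 2) ≤
      (Real.sqrt (∑ i ∈ s, f i ^ 2) + Real.sqrt (∑ i ∈ s, g i ^ 2)) ^ 2 := by
    have hexp : ∑ i ∈ s, (f i + g i) ^ 2
        = (∑ i ∈ s, f i ^ 2) + 2 * (∑ i ∈ s, f i * g i) + ∑ i ∈ s, g i ^ 2 := by
      rw [Finset.mul_sum, ← Finset.sum_add_distrib, ← Finset.sum_add_distrib]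
      exact Finset.sum_congr rfl fun i _ => by ring
    have hsqA : Real.sqrt (∑ i ∈ s, f i ^ 2) ^ 2 = ∑ i ∈ s, f i ^ 2 := Real.sq_sqrt hA
    have hsqB : Real.sqrt (∑ i ∈ s, g i ^ 2) ^ 2 = ∑ i ∈ s, g i ^ 2 := Real.sq_sqrt hB
    nlinarith [h1]
  calc Real.sqrt (∑ i ∈ s, (f i + g i) ^ 2) ≤
      Real.sqrt ((Real.sqrt (∑ i ∈ s, f i ^ 2) + Real.sqrt (∑ i ∈ s, g i ^ 2)) ^ 2) :=
        Real.sqrt_le_sqrt key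
    _ = _ := Real.sqrt_sq (by positivity)

/-- Lower bound for the square integral of an affine function. -/
lemma my_affine_lower (a h p γ : ℝ) (hh : 0 < h) :
    γ ^ 2 * h ^ 3 / 12 ≤ ∫ t in a..(a + h), (p + γ * t) ^ 2 := by
  have hexp : (∫ t in a..(a + h), (p + γ * t) ^ 2)
      = p ^ 2 * ((a + h) - a) + (2 * p * γ) * (((a + h) ^ 2 - a ^ 2) / 2)
        + γ ^ 2 * (((a + h) ^ 3 - a ^ 3) / 3) := by
    have h1 : ∀ t ∈ Set.uIcc a (a + h), (p + γ * t) ^ 2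
        = (p ^ 2 + (2 * p * γ) * t) + γ ^ 2 * t ^ 2 := by intro t _; ring
    rw [integral_congr h1, intervalIntegral.integral_add, intervalIntegral.integral_add, intervalIntegral.integral_const,
      intervalIntegral.integral_const_mul, intervalIntegral.integral_const_mul, integral_id, integral_pow]
    · push_cast
      rw [smul_eq_mul]
      ring
    · exact intervalIntegrable_const
    · exact (intervalIntegral.intervalIntegrable_id).const_mul _
    · exact intervalIntegrable_const.add ((intervalIntegral.intervalIntegrable_id).const_mul _)
    · exact ((continuous_pow 2).intervalIntegrable _ _).const_mul _
  rw [hexp]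
  nlinarith [mul_nonneg hh.le (sq_nonneg (p + γ * a + γ * h / 2)), sq_nonneg γ, hh]

/-- Membership in the modified piecewise linear finite element space
S̃_h¹(0,1). -/
def ModPW (n : ℕ) (x : ℕ → ℝ) (f : ℝ → ℝ) : Prop :=
  ContinuousOn f (Set.Icc 0 1) ∧
  (∀ t ∈ Set.Icc (x 0) (x 1), f t = f (x 1)) ∧
  (∀ t ∈ Set.Icc (x (n - 1)) (x n), f t = f (x (n - 1))) ∧
  (∀ i, 1 ≤ i → i + 1 ≤ n - 1 →
    ∃ α β : ℝ, ∀ t ∈ Set.Icc (x i) (x (i + 1)), f t = α + β * t)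

set_option maxHeartbeats 1000000 in
/-- H¹-stability of the L² projection Q_h onto S̃_h¹(0,1)
on the uniform mesh with size h, for y ∈ H¹(0,1) with y'(0) = y'(1) = 0:
‖(Q_h y)'‖_{L²(0,1)} ≤ (1 + 4√6) ‖y'‖_{L²(0,1)}. -/
theorem stmt_12
    (n : ℕ) (hn : 2 ≤ n) (h : ℝ) (hh : h = 1 / (n : ℝ))
    (y y' Qy : ℝ → ℝ)
    (hy : ∀ t, HasDerivAt y (y' t) t)
    (hy'L2 : IntervalIntegrable (fun t => (y' t) ^ 2) volume 0 1)
    (hb0 : y' 0 = 0) (hb1 : y' 1 = 0)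
    (hQmem : ModPW n (fun i => (i : ℝ) * h) Qy)
    (hproj : ∀ yh : ℝ → ℝ, ModPW n (fun i => (i : ℝ) * h) yh →
      ∫ t in (0:ℝ)..1, Qy t * yh t = ∫ t in (0:ℝ)..1, y t * yh t) :
    Real.sqrt (∫ t in (0:ℝ)..1, (deriv Qy t) ^ 2) ≤
      (1 + 4 * Real.sqrt 6) * Real.sqrt (∫ t in (0:ℝ)..1, (y' t) ^ 2) := by
  obtain ⟨m, rfl⟩ : ∃ m, n = m + 2 := ⟨n - 2, by omega⟩
  clear hn hb0 hb1
  have hnpos : (0:ℝ) < (m + 2 : ℕ) := by positivity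
  have hhpos : 0 < h := by rw [hh]; positivity
  set x : ℕ → ℝ := fun i => (i : ℝ) * h with hxdef
  have hx0 : x 0 = 0 := by simp [hxdef]
  have hxsucc : ∀ i : ℕ, x (i + 1) = x i + h := by
    intro i; simp [hxdef]; push_cast; ring
  have hxlast : x (m + 2) = 1 := by
    simp only [hxdef, hh]; field_simp
  have hxmono : ∀ {i j : ℕ}, i ≤ j → x i ≤ x j := by
    intro i j hij
    simp only [hxdef]
    have : (i:ℝ) ≤ j := by exact_mod_cast hij
    nlinarith
  have hxmem : ∀ {i : ℕ}, i ≤ m + 2 → x i ∈ Set.Icc (0:ℝ) 1 := by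
    intro i hi
    exact ⟨hx0 ▸ hxmono (Nat.zero_le i), hxlast ▸ hxmono hi⟩
  have hycont : Continuous y := by
    rw [continuous_iff_continuousAt]
    exact fun t => (hy t).differentiableAt.continuousAt
  have hy'sq : ∀ {a b : ℝ}, a ∈ Set.Icc (0:ℝ) 1 → b ∈ Set.Icc (0:ℝ) 1 →
      IntervalIntegrable (fun t => y' t ^ 2) volume a b := by
    intro a b ha hb
    refine hy'L2.mono_set ?_
    rw [Set.uIcc_of_le (zero_le_one)]
    exact Set.uIcc_subset_Icc ha hb
  have hy'meas : Measurable y' := by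
    have : y' = deriv y := funext fun t => ((hy t).deriv).symm
    rw [this]; exact measurable_deriv y
  have hy'int : ∀ {a b : ℝ}, a ∈ Set.Icc (0:ℝ) 1 → b ∈ Set.Icc (0:ℝ) 1 →
      IntervalIntegrable y' volume a b := by
    intro a b ha hb
    have h2 := hy'sq ha hb
    rw [intervalIntegrable_iff] at h2 ⊢
    have hconst : IntegrableOn (fun _ : ℝ => (1:ℝ)) (Set.uIoc a b) volume :=
      integrableOn_const measure_Ioc_lt_top.ne
    have hsum : IntegrableOn (fun t => y' t ^ 2 + 1) (Set.uIoc a b) volume := h2.add hconst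
    refine hsum.mono' hy'meas.aestronglyMeasurable.restrict ?_
    refine Filter.Eventually.of_forall fun t => ?_
    rw [Real.norm_eq_abs]
    nlinarith [sq_nonneg (|y' t| - 1), abs_nonneg (y' t), sq_abs (y' t)]
  have hFTC : ∀ {a b : ℝ}, a ∈ Set.Icc (0:ℝ) 1 → b ∈ Set.Icc (0:ℝ) 1 →
      (∫ t in a..b, y' t) = y b - y a := fun ha hb =>
    integral_eq_sub_of_hasDerivAt (fun t _ => hy t) (hy'int ha hb)
  -- interpolant slopes
  set bh : ℕ → ℝ := fun i => (y (x (i + 1)) - y (x i)) / h with hbhdef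
  -- piecewise-constant slope function
  set s : ℝ → ℝ := fun u => ∑ i ∈ Finset.Icc 1 m,
    Set.indicator (Set.Ico (x i) (x (i + 1))) (fun _ => bh i) u with hsdef
  have hsint : ∀ a b : ℝ, IntervalIntegrable s volume a b := by
    intro a b
    rw [intervalIntegrable_iff]
    apply integrable_finset_sum
    intro i _
    refine Integrable.indicator ?_ measurableSet_Ico
    exact integrableOn_const measure_Ioc_lt_top.ne
  have hsval : ∀ i : ℕ, 1 ≤ i → i ≤ m → ∀ u ∈ Set.Ico (x i) (x (i + 1)),
      s u = bh i := by
    intro i h1 h2 u hu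
    simp only [hsdef]
    rw [Finset.sum_eq_single_of_mem i (Finset.mem_Icc.2 ⟨h1, h2⟩)]
    · rw [Set.indicator_of_mem hu]
    · intro j hj hne
      rw [Set.indicator_of_notMem]
      intro hj'
      rcases lt_or_gt_of_ne hne with hlt | hgt
      · exact absurd (lt_of_lt_of_le hj'.2 (hxmono (Nat.succ_le_of_lt hlt)))
          (not_lt.2 hu.1)
      · exact absurd (lt_of_lt_of_le hu.2 (hxmono (Nat.succ_le_of_lt hgt)))
          (not_lt.2 hj'.1)
  have hszero_lt : ∀ u : ℝ, u < x 1 → s u = 0 := by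
    intro u hu
    simp only [hsdef]
    apply Finset.sum_eq_zero
    intro i hi
    rw [Set.indicator_of_notMem]
    intro h'
    exact absurd (lt_of_lt_of_le hu (hxmono (Finset.mem_Icc.1 hi).1)) (not_lt.2 h'.1)
  have hszero_ge : ∀ u : ℝ, x (m + 1) ≤ u → s u = 0 := by
    intro u hu
    simp only [hsdef]
    apply Finset.sum_eq_zero
    intro i hi
    rw [Set.indicator_of_notMem]
    intro h'
    have hle : x (i + 1) ≤ x (m + 1) :=
      hxmono (Nat.succ_le_succ (Finset.mem_Icc.1 hi).2)
    exact absurd (lt_of_lt_of_le h'.2 (hle.trans hu)) (lt_irrefl u)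
  -- the interpolant
  set I : ℝ → ℝ := fun t => y (x 1) + ∫ u in (x 1)..t, s u with hIdef
  have hIcont : Continuous I := by
    exact continuous_const.add (intervalIntegral.continuous_primitive hsint (x 1))
  have hIdiff : ∀ c d : ℝ, I d - I c = ∫ u in c..d, s u := by
    intro c d
    simp only [hIdef, add_sub_add_left_eq_sub]
    exact integral_interval_sub_left (hsint (x 1) d) (hsint (x 1) c)
  have hIconst1 : ∀ t ∈ Set.Icc (x 0) (x 1), I t = I (x 1) := by
    intro t ht
    have key : (∫ u in t..(x 1), s u) = 0 := by
      rw [my_integral_congr_off_singleton (p := x 1) (g := fun _ => (0:ℝ)) ?_]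
      · simp
      · intro u hu hne
        apply hszero_lt
        rw [Set.uIoc_of_le ht.2] at hu
        exact lt_of_le_of_ne hu.2 hne
    have h2 := hIdiff t (x 1)
    rw [key] at h2
    linarith
  have hIconst2 : ∀ t ∈ Set.Icc (x (m + 1)) (x (m + 2)), I t = I (x (m + 1)) := by
    intro t ht
    have key : (∫ u in (x (m + 1))..t, s u) = 0 := by
      rw [integral_congr (g := fun _ => (0:ℝ)) ?_]
      · simp
      · intro u hu
        rw [Set.uIcc_of_le ht.1] at hu
        exact hszero_ge u hu.1
    have h2 := hIdiff (x (m + 1)) t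
    rw [key] at h2
    linarith
  have hIaffine : ∀ i : ℕ, 1 ≤ i → i ≤ m → ∀ t ∈ Set.Icc (x i) (x (i + 1)),
      I t = I (x i) + bh i * (t - x i) := by
    intro i h1 h2 t ht
    have key : (∫ u in (x i)..t, s u) = bh i * (t - x i) := by
      have heq : (∫ u in (x i)..t, s u) = ∫ u in (x i)..t, bh i := by
        apply my_integral_congr_off_singleton (p := x (i + 1))
        intro u hu hne
        apply hsval i h1 h2
        rw [Set.uIoc_of_le ht.1] at hu
        exact ⟨hu.1.le, lt_of_le_of_ne (hu.2.trans ht.2) hne⟩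
      rw [heq, intervalIntegral.integral_const, smul_eq_mul, mul_comm]
    have h2' := hIdiff (x i) t
    rw [key] at h2'
    linarith
  have hInodal : ∀ i : ℕ, 1 ≤ i → i ≤ m + 1 → I (x i) = y (x i) := by
    intro i h1
    induction i, h1 using Nat.le_induction with
    | base => intro _; simp [hIdef]
    | succ i hi ih =>
      intro h2
      have h2' : i ≤ m := by omega
      have hmem : x (i + 1) ∈ Set.Icc (x i) (x (i + 1)) :=
        ⟨hxmono (Nat.le_succ i), le_refl _⟩
      have haff := hIaffine i hi h2' (x (i + 1)) hmem
      rw [haff, ih (by omega), hxsucc i]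
      simp only [hbhdef]
      field_simp
      rw [hxsucc i]
      ring
  have hImod : ModPW (m + 2) x I := by
    refine ⟨hIcont.continuousOn, hIconst1, hIconst2, ?_⟩
    intro i h1 h2
    have h2' : i ≤ m := by omega
    exact ⟨I (x i) - bh i * x i, bh i, fun t ht => by
      rw [hIaffine i h1 h2' t ht]; ring⟩
  clear_value s I bh
  -- structure of Qy
  have hQcont : ContinuousOn Qy (Set.Icc 0 1) := hQmem.1
  choose! α β hQaff using fun (i : ℕ) (h1 : 1 ≤ i) (h2 : i + 1 ≤ (m + 2) - 1) =>
    hQmem.2.2.2 i h1 h2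
  -- the difference w
  set w : ℝ → ℝ := fun t => Qy t - I t with hwdef
  have hwmod : ModPW (m + 2) x w := by
    obtain ⟨hQc, hQ1, hQ2, _⟩ := hQmem
    refine ⟨hQc.sub hIcont.continuousOn, ?_, ?_, ?_⟩
    · intro t ht
      simp only [hwdef]
      rw [hQ1 t ht, hIconst1 t ht]
    · intro t ht
      simp only [hwdef]
      rw [hQ2 t ht, hIconst2 t ht]
      norm_num
    · intro i h1 h2
      have h2' : i ≤ m := by omega
      refine ⟨α i - I (x i) + bh i * x i, β i - bh i, fun t ht => ?_⟩
      simp only [hwdef]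
      rw [hQaff i h1 h2 t ht, hIaffine i h1 h2' t ht]
      ring
  set γ : ℕ → ℝ := fun i => β i - bh i with hγdef
  set A := ∫ t in (0:ℝ)..1, y' t ^ 2 with hAdef
  have hA0 : 0 ≤ A := integral_nonneg zero_le_one fun u _ => sq_nonneg _
  -- orthogonality
  have huIcc : Set.uIcc (0:ℝ) 1 = Set.Icc 0 1 := Set.uIcc_of_le zero_le_one
  have hwcont : ContinuousOn w (Set.Icc 0 1) := hQcont.sub hIcont.continuousOn
  have hint1 : IntervalIntegrable (fun t => Qy t * w t) volume 0 1 :=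
    ContinuousOn.intervalIntegrable (by rw [huIcc]; exact hQcont.mul hwcont)
  have hint2 : IntervalIntegrable (fun t => I t * w t) volume 0 1 :=
    ContinuousOn.intervalIntegrable (by rw [huIcc]; exact hIcont.continuousOn.mul hwcont)
  have hint3 : IntervalIntegrable (fun t => y t * w t) volume 0 1 :=
    ContinuousOn.intervalIntegrable (by rw [huIcc]; exact hycont.continuousOn.mul hwcont)
  have horth : (∫ t in (0:ℝ)..1, w t ^ 2) = ∫ t in (0:ℝ)..1, (y t - I t) * w t := by
    have hp := hproj w hwmod
    have e1 : (fun t => w t ^ 2) = fun t => Qy t * w t - I t * w t := by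
      funext t; simp only [hwdef]; ring
    have e2 : (fun t => (y t - I t) * w t) = fun t => y t * w t - I t * w t := by
      funext t; ring
    rw [e1, e2, integral_sub hint1 hint2, integral_sub hint3 hint2, hp]
  -- element decomposition of A
  have hAsplit : A = ∑ j ∈ Finset.range (m + 2), ∫ t in (x j)..(x (j + 1)), y' t ^ 2 := by
    have hs := sum_integral_adjacent_intervals (μ := volume)
      (f := fun t => y' t ^ 2) (a := x) (n := m + 2)
      (fun k hk => hy'sq (hxmem (by omega)) (hxmem (by omega)))
    rw [hx0, hxlast] at hs
    exact hs.symm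
  -- interpolation error per element
  have elem_bound : ∀ a b c bb : ℝ, a ∈ Set.Icc (0:ℝ) 1 → b ∈ Set.Icc (0:ℝ) 1 →
      a ≤ b → b - a = h → c ∈ Set.Icc a b →
      (∀ t ∈ Set.Icc a b, y t - I t = ∫ u in c..t, (y' u - bb)) →
      ((∫ u in a..b, (y' u - bb) ^ 2) ≤ ∫ u in a..b, y' u ^ 2) →
      (∫ t in a..b, (y t - I t) ^ 2) ≤ h ^ 2 * ∫ t in a..b, y' t ^ 2 := by
    intro a b c bb ha hb hab hba hc hrep hless
    have hgint : IntervalIntegrable (fun u => y' u - bb) volume a b :=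
      (hy'int ha hb).sub intervalIntegrable_const
    have hg2int : IntervalIntegrable (fun u => (y' u - bb) ^ 2) volume a b := by
      have e : (fun u => (y' u - bb) ^ 2)
          = fun u => (y' u ^ 2 - (2 * bb) * y' u) + bb ^ 2 := funext fun u => by ring
      rw [e]
      exact ((hy'sq ha hb).sub ((hy'int ha hb).const_mul _)).add intervalIntegrable_const
    have hbd : ∀ t ∈ Set.Icc a b, (y t - I t) ^ 2 ≤ h * ∫ u in a..b, y' u ^ 2 := by
      intro t ht
      rw [hrep t ht]
      calc (∫ u in c..t, (y' u - bb)) ^ 2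
          ≤ (b - a) * ∫ u in a..b, (y' u - bb) ^ 2 :=
            my_sq_integral_le hab hc ht _ hgint hg2int
        _ ≤ h * ∫ u in a..b, y' u ^ 2 := by
            rw [hba]; exact mul_le_mul_of_nonneg_left hless hhpos.le
    have hecont : Continuous fun t => (y t - I t) ^ 2 := (hycont.sub hIcont).pow 2
    have step : (∫ t in a..b, (y t - I t) ^ 2)
        ≤ ∫ _ in a..b, (h * ∫ u in a..b, y' u ^ 2) := by
      apply integral_mono_on hab (hecont.intervalIntegrable a b)
        intervalIntegrable_const hbd
    calc ∫ t in a..b, (y t - I t) ^ 2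
        ≤ ∫ _ in a..b, (h * ∫ u in a..b, y' u ^ 2) := step
      _ = (b - a) * (h * ∫ u in a..b, y' u ^ 2) := by
          rw [intervalIntegral.integral_const, smul_eq_mul]
      _ = h ^ 2 * ∫ t in a..b, y' t ^ 2 := by rw [hba]; ring
  have hinterrel : ∀ j : ℕ, j < m + 2 → (∫ t in (x j)..(x (j + 1)), (y t - I t) ^ 2)
      ≤ h ^ 2 * ∫ t in (x j)..(x (j + 1)), y' t ^ 2 := by
    intro j hj
    have haI : x j ∈ Set.Icc (0:ℝ) 1 := hxmem (by omega)
    have hbI : x (j + 1) ∈ Set.Icc (0:ℝ) 1 := hxmem (by omega)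
    have hab : x j ≤ x (j + 1) := hxmono (Nat.le_succ j)
    have hba : x (j + 1) - x j = h := by rw [hxsucc j]; ring
    have hsubIcc : Set.Icc (x j) (x (j + 1)) ⊆ Set.Icc (0:ℝ) 1 :=
      Set.Icc_subset_Icc haI.1 hbI.2
    rcases Nat.eq_zero_or_pos j with hj0 | hjpos
    · subst hj0
      refine elem_bound (x 0) (x 1) (x 1) 0 haI hbI hab hba
        ⟨hab, le_refl _⟩ ?_ ?_
      · intro t ht
        rw [hIconst1 t ht, hInodal 1 le_rfl (by omega)]
        have hft := hFTC (a := x 1) (b := t) hbI (hsubIcc ht)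
        simp only [sub_zero]
        linarith [hft]
      · simp
    rcases Nat.lt_or_ge j (m + 1) with hjm | hjm
    · -- middle element : 1 ≤ j ≤ m
      have h1 : 1 ≤ j := hjpos
      have h2 : j ≤ m := by omega
      refine elem_bound (x j) (x (j + 1)) (x j) (bh j) haI hbI hab hba
        ⟨le_refl _, hab⟩ ?_ ?_
      · intro t ht
        have hft := hFTC (a := x j) (b := t) haI (hsubIcc ht)
        have haff := hIaffine j h1 h2 t ht
        rw [haff, hInodal j h1 (by omega)]
        rw [integral_sub (hy'int haI (hsubIcc ht)) intervalIntegrable_const,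
          intervalIntegral.integral_const, smul_eq_mul, hft]
        ring
      · -- ∫ (y' - bh j)^2 ≤ ∫ y'^2
        have hftel := hFTC (a := x j) (b := x (j + 1)) haI hbI
        have hmean : (∫ u in (x j)..(x (j + 1)), y' u) = bh j * h := by
          rw [hftel]
          simp only [hbhdef]
          field_simp
        have e : (fun u => (y' u - bh j) ^ 2)
            = fun u => (y' u ^ 2 - (2 * bh j) * y' u) + bh j ^ 2 :=
          funext fun u => by ring
        rw [e, integral_add (((hy'sq haI hbI).sub ((hy'int haI hbI).const_mul _)))
            intervalIntegrable_const,
          integral_sub (hy'sq haI hbI) ((hy'int haI hbI).const_mul _),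
          intervalIntegral.integral_const_mul, hmean, intervalIntegral.integral_const, smul_eq_mul, hba]
        nlinarith [sq_nonneg (bh j), hhpos]
    · -- last element : j = m + 1
      have hjeq : j = m + 1 := by omega
      subst hjeq
      refine elem_bound (x (m + 1)) (x (m + 2)) (x (m + 1)) 0 haI hbI hab hba
        ⟨le_refl _, hab⟩ ?_ ?_
      · intro t ht
        rw [hIconst2 t ht, hInodal (m + 1) (by omega) le_rfl]
        have hft := hFTC (a := x (m + 1)) (b := t) haI (hsubIcc ht)
        simp only [sub_zero]
        linarith [hft]
      · simp
  have hecont : Continuous fun t => (y t - I t) ^ 2 := (hycont.sub hIcont).pow 2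
  have hinterr : (∫ t in (0:ℝ)..1, (y t - I t) ^ 2) ≤ h ^ 2 * A := by
    have hs := sum_integral_adjacent_intervals (μ := volume)
      (f := fun t => (y t - I t) ^ 2) (a := x) (n := m + 2)
      (fun k _ => hecont.intervalIntegrable _ _)
    rw [hx0, hxlast] at hs
    rw [← hs, hAsplit, Finset.mul_sum]
    exact Finset.sum_le_sum fun j hj => hinterrel j (Finset.mem_range.1 hj)
  have hw2int : IntervalIntegrable (fun t => w t ^ 2) volume 0 1 :=
    ContinuousOn.intervalIntegrable (by rw [huIcc]; exact hwcont.pow 2)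
  have hproj2 : (∫ t in (0:ℝ)..1, w t ^ 2) ≤ ∫ t in (0:ℝ)..1, (y t - I t) ^ 2 := by
    have hE2int : IntervalIntegrable (fun t => (y t - I t) ^ 2) volume 0 1 :=
      hecont.intervalIntegrable _ _
    have hprodint : IntervalIntegrable (fun t => (y t - I t) * w t) volume 0 1 :=
      ContinuousOn.intervalIntegrable
        (by rw [huIcc]; exact (hycont.continuousOn.sub hIcont.continuousOn).mul hwcont)
    have hcs := my_integral_cs zero_le_one (fun t => y t - I t) w hE2int hw2int hprodint
    rw [← horth] at hcs
    have hWnn : 0 ≤ ∫ t in (0:ℝ)..1, w t ^ 2 :=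
      integral_nonneg zero_le_one fun u _ => sq_nonneg _
    rcases hWnn.eq_or_lt with hW0 | hWpos
    · rw [← hW0]
      exact integral_nonneg zero_le_one fun u _ => sq_nonneg _
    · nlinarith [hcs, hWpos]
  -- slopes bound
  have helnn : ∀ j : ℕ, 0 ≤ ∫ t in (x j)..(x (j + 1)), y' t ^ 2 := fun j =>
    integral_nonneg (hxmono (Nat.le_succ j)) fun u _ => sq_nonneg _
  have hS1 : ∑ i ∈ Finset.Icc 1 m, bh i ^ 2 * h ≤ A := by
    have per : ∀ i ∈ Finset.Icc 1 m,
        bh i ^ 2 * h ≤ ∫ t in (x i)..(x (i + 1)), y' t ^ 2 := by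
      intro i hi
      obtain ⟨h1, h2⟩ := Finset.mem_Icc.1 hi
      have haI : x i ∈ Set.Icc (0:ℝ) 1 := hxmem (by omega)
      have hbI : x (i + 1) ∈ Set.Icc (0:ℝ) 1 := hxmem (by omega)
      have hab : x i ≤ x (i + 1) := hxmono (Nat.le_succ i)
      have hba : x (i + 1) - x i = h := by rw [hxsucc i]; ring
      have hmean : (∫ u in (x i)..(x (i + 1)), y' u) = bh i * h := by
        rw [hFTC haI hbI]
        simp only [hbhdef]
        field_simp
      have hcs := my_sq_integral_le hab ⟨le_refl _, hab⟩ ⟨hab, le_refl _⟩ y'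
        (hy'int haI hbI) (hy'sq haI hbI)
      rw [hmean, hba] at hcs
      nlinarith [hcs, hhpos, sq_nonneg (bh i)]
    calc ∑ i ∈ Finset.Icc 1 m, bh i ^ 2 * h
        ≤ ∑ i ∈ Finset.Icc 1 m, ∫ t in (x i)..(x (i + 1)), y' t ^ 2 :=
          Finset.sum_le_sum per
      _ ≤ ∑ j ∈ Finset.range (m + 2), ∫ t in (x j)..(x (j + 1)), y' t ^ 2 := by
          apply Finset.sum_le_sum_of_subset_of_nonneg
          · intro i hi
            rw [Finset.mem_range]
            have := (Finset.mem_Icc.1 hi).2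
            omega
          · exact fun j _ _ => helnn j
      _ = A := hAsplit.symm
  have hS2 : ∑ i ∈ Finset.Icc 1 m, γ i ^ 2 * h ≤ 12 * A := by
    have hwel : ∀ j : ℕ, j < m + 2 →
        IntervalIntegrable (fun t => w t ^ 2) volume (x j) (x (j + 1)) := by
      intro j hj
      apply ContinuousOn.intervalIntegrable
      have hsub : Set.uIcc (x j) (x (j + 1)) ⊆ Set.Icc 0 1 := by
        rw [Set.uIcc_of_le (hxmono (Nat.le_succ j))]
        exact Set.Icc_subset_Icc (hxmem (by omega)).1 (hxmem (by omega)).2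
      exact (hwcont.pow 2).mono hsub
    have hwsplit : (∫ t in (0:ℝ)..1, w t ^ 2)
        = ∑ j ∈ Finset.range (m + 2), ∫ t in (x j)..(x (j + 1)), w t ^ 2 := by
      have hs := sum_integral_adjacent_intervals (μ := volume)
        (f := fun t => w t ^ 2) (a := x) (n := m + 2) (fun k hk => hwel k hk)
      rw [hx0, hxlast] at hs
      exact hs.symm
    have hwelnn : ∀ j : ℕ, 0 ≤ ∫ t in (x j)..(x (j + 1)), w t ^ 2 := fun j =>
      integral_nonneg (hxmono (Nat.le_succ j)) fun u _ => sq_nonneg _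
    have per : ∀ i ∈ Finset.Icc 1 m,
        γ i ^ 2 * h ≤ 12 / h ^ 2 * ∫ t in (x i)..(x (i + 1)), w t ^ 2 := by
      intro i hi
      obtain ⟨h1, h2⟩ := Finset.mem_Icc.1 hi
      have haffQ := hQaff i h1 (by omega)
      have haffI := hIaffine i h1 h2
      have hwaff : ∀ t ∈ Set.Icc (x i) (x (i + 1)),
          w t = (α i - I (x i) + bh i * x i) + γ i * t := by
        intro t ht
        simp only [hwdef, hγdef]
        rw [haffQ t ht, haffI t ht]
        ring
      have heq : (∫ t in (x i)..(x (i + 1)), w t ^ 2)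
          = ∫ t in (x i)..((x i) + h), ((α i - I (x i) + bh i * x i) + γ i * t) ^ 2 := by
        rw [← hxsucc i]
        apply integral_congr
        intro t ht
        rw [Set.uIcc_of_le (hxmono (Nat.le_succ i))] at ht
        show w t ^ 2 = ((α i - I (x i) + bh i * x i) + γ i * t) ^ 2
        rw [hwaff t ht]
      have hlow := my_affine_lower (x i) h (α i - I (x i) + bh i * x i) (γ i) hhpos
      rw [← heq] at hlow
      calc γ i ^ 2 * h = 12 / h ^ 2 * (γ i ^ 2 * h ^ 3 / 12) := by
            field_simp
        _ ≤ 12 / h ^ 2 * ∫ t in (x i)..(x (i + 1)), w t ^ 2 :=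
            mul_le_mul_of_nonneg_left hlow (by positivity)
    calc ∑ i ∈ Finset.Icc 1 m, γ i ^ 2 * h
        ≤ ∑ i ∈ Finset.Icc 1 m, 12 / h ^ 2 * ∫ t in (x i)..(x (i + 1)), w t ^ 2 :=
          Finset.sum_le_sum per
      _ = 12 / h ^ 2 * ∑ i ∈ Finset.Icc 1 m, ∫ t in (x i)..(x (i + 1)), w t ^ 2 := by
          rw [Finset.mul_sum]
      _ ≤ 12 / h ^ 2 * ∑ j ∈ Finset.range (m + 2), ∫ t in (x j)..(x (j + 1)), w t ^ 2 := by
          apply mul_le_mul_of_nonneg_left ?_ (by positivity)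
          apply Finset.sum_le_sum_of_subset_of_nonneg
          · intro i hi
            rw [Finset.mem_range]
            have := (Finset.mem_Icc.1 hi).2
            omega
          · exact fun j _ _ => hwelnn j
      _ = 12 / h ^ 2 * ∫ t in (0:ℝ)..1, w t ^ 2 := by rw [← hwsplit]
      _ ≤ 12 / h ^ 2 * (h ^ 2 * A) := by
          apply mul_le_mul_of_nonneg_left (hproj2.trans hinterr) (by positivity)
      _ = 12 * A := by field_simp
  -- derivative of Qy
  have hQd : (∫ t in (0:ℝ)..1, (deriv Qy t) ^ 2) = ∑ i ∈ Finset.Icc 1 m, β i ^ 2 * h := by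
    have hderiv : ∀ j : ℕ, j < m + 2 → ∀ t ∈ Set.Ioo (x j) (x (j + 1)),
        deriv Qy t = (if 1 ≤ j ∧ j ≤ m then β j else 0) := by
      intro j hj t ht
      rcases Nat.eq_zero_or_pos j with hj0 | hjpos
      · subst hj0
        have hev : Qy =ᶠ[nhds t] fun _ => Qy (x 1) :=
          Filter.eventuallyEq_of_mem (Ioo_mem_nhds ht.1 ht.2)
            (fun u hu => hQmem.2.1 u (Set.Ioo_subset_Icc_self hu))
        rw [hev.deriv_eq]
        simp
      rcases Nat.lt_or_ge j (m + 1) with hjm | hjm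
      · have h1 : 1 ≤ j := hjpos
        have h2 : j ≤ m := by omega
        have hev : Qy =ᶠ[nhds t] fun u => α j + β j * u :=
          Filter.eventuallyEq_of_mem (Ioo_mem_nhds ht.1 ht.2)
            (fun u hu => hQaff j h1 (by omega) u (Set.Ioo_subset_Icc_self hu))
        rw [hev.deriv_eq, if_pos ⟨h1, h2⟩]
        have hd : HasDerivAt (fun u => α j + β j * u) (β j) t := by
          simpa using ((hasDerivAt_id t).const_mul (β j)).const_add (α j)
        exact hd.deriv
      · have hjeq : j = m + 1 := by omega
        subst hjeq
        have hQ2 := hQmem.2.2.1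
        have hev : Qy =ᶠ[nhds t] fun _ => Qy (x (m + 2 - 1)) :=
          Filter.eventuallyEq_of_mem (Ioo_mem_nhds ht.1 ht.2)
            (fun u hu => hQ2 u (Set.Ioo_subset_Icc_self hu))
        rw [hev.deriv_eq, if_neg (by omega)]
        simp
    have helem : ∀ j : ℕ, j < m + 2 →
        (∫ t in (x j)..(x (j + 1)), (deriv Qy t) ^ 2)
          = (if 1 ≤ j ∧ j ≤ m then β j ^ 2 * h else 0) ∧
        IntervalIntegrable (fun t => (deriv Qy t) ^ 2) volume (x j) (x (j + 1)) := by
      intro j hj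
      set c : ℝ := if 1 ≤ j ∧ j ≤ m then β j else 0 with hcdef
      have hab : x j ≤ x (j + 1) := hxmono (Nat.le_succ j)
      have hpt : ∀ u ∈ Set.uIoc (x j) (x (j + 1)), u ≠ x (j + 1) →
          (deriv Qy u) ^ 2 = c ^ 2 := by
        intro u hu hne
        rw [Set.uIoc_of_le hab] at hu
        have : u ∈ Set.Ioo (x j) (x (j + 1)) := ⟨hu.1, lt_of_le_of_ne hu.2 hne⟩
        rw [hderiv j hj u this]
      constructor
      · rw [my_integral_congr_off_singleton (p := x (j + 1)) (g := fun _ => c ^ 2) hpt,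
          intervalIntegral.integral_const, smul_eq_mul, hxsucc j]
        by_cases hcs : 1 ≤ j ∧ j ≤ m
        · rw [if_pos hcs]
          simp only [hcdef, if_pos hcs]
          ring
        · rw [if_neg hcs]
          simp only [hcdef, if_neg hcs]
          ring
      · exact intervalIntegrable_iff.2 (Integrable.congr (intervalIntegrable_iff.1 intervalIntegrable_const)
          ((my_ae_restrict_off_singleton (p := x (j + 1)) hpt).symm))
    have hsplit := sum_integral_adjacent_intervals (μ := volume)
      (f := fun t => (deriv Qy t) ^ 2) (a := x) (n := m + 2)
      (fun k hk => (helem k hk).2)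
    rw [hx0, hxlast] at hsplit
    rw [← hsplit, Finset.sum_congr rfl (fun j hj => (helem j (Finset.mem_range.1 hj)).1)]
    rw [← Finset.sum_subset (s₁ := Finset.Icc 1 m) (s₂ := Finset.range (m + 2))
      (by intro i hi; rw [Finset.mem_range]; have := (Finset.mem_Icc.1 hi).2; omega)
      (fun j _ hj => if_neg (by rw [Finset.mem_Icc] at hj; omega))]
    exact Finset.sum_congr rfl fun j hj => if_pos (Finset.mem_Icc.1 hj)
  -- final assembly
  have hsq : ∀ r : ℝ, (r * Real.sqrt h) ^ 2 = r ^ 2 * h := by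
    intro r
    rw [mul_pow, Real.sq_sqrt hhpos.le]
  have hbeta : ∀ i : ℕ, β i * Real.sqrt h
      = bh i * Real.sqrt h + γ i * Real.sqrt h := by
    intro i
    simp only [hγdef]
    ring
  have hLHS : (∫ t in (0:ℝ)..1, (deriv Qy t) ^ 2)
      = ∑ i ∈ Finset.Icc 1 m, (bh i * Real.sqrt h + γ i * Real.sqrt h) ^ 2 := by
    rw [hQd]
    exact Finset.sum_congr rfl fun i _ => by rw [← hbeta i, hsq]
  rw [hLHS]
  have hmink := my_minkowski (Finset.Icc 1 m) (fun i => bh i * Real.sqrt h)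
    (fun i => γ i * Real.sqrt h)
  have hs1' : Real.sqrt (∑ i ∈ Finset.Icc 1 m, (bh i * Real.sqrt h) ^ 2)
      ≤ Real.sqrt A := by
    apply Real.sqrt_le_sqrt
    rw [Finset.sum_congr rfl fun i _ => hsq (bh i)]
    exact hS1
  have hs2' : Real.sqrt (∑ i ∈ Finset.Icc 1 m, (γ i * Real.sqrt h) ^ 2)
      ≤ Real.sqrt (12 * A) := by
    apply Real.sqrt_le_sqrt
    rw [Finset.sum_congr rfl fun i _ => hsq (γ i)]
    exact hS2
  have h12 : Real.sqrt (12 * A) ≤ 4 * Real.sqrt 6 * Real.sqrt A := by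
    have e1 : (4 : ℝ) * Real.sqrt 6 * Real.sqrt A = Real.sqrt (96 * A) := by
      rw [Real.sqrt_mul (by norm_num : (0:ℝ) ≤ 96) A,
        show (96:ℝ) = 4 ^ 2 * 6 by norm_num,
        Real.sqrt_mul (by positivity) 6, Real.sqrt_sq (by norm_num : (0:ℝ) ≤ 4)]
    rw [e1]
    exact Real.sqrt_le_sqrt (by nlinarith [hA0])
  calc Real.sqrt (∑ i ∈ Finset.Icc 1 m, (bh i * Real.sqrt h + γ i * Real.sqrt h) ^ 2)
      ≤ Real.sqrt (∑ i ∈ Finset.Icc 1 m, (bh i * Real.sqrt h) ^ 2)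
        + Real.sqrt (∑ i ∈ Finset.Icc 1 m, (γ i * Real.sqrt h) ^ 2) := hmink
    _ ≤ Real.sqrt A + Real.sqrt (12 * A) := add_le_add hs1' hs2'
    _ ≤ Real.sqrt A + 4 * Real.sqrt 6 * Real.sqrt A := by linarith [h12]
    _ = (1 + 4 * Real.sqrt 6) * Real.sqrt A := by ring
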